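/- arXiv:2009.12769 — 6 statements merged into one kernel-verified Lean document; each statement's English description precedes it below -/
import Mathlib

section
/- The recursively defined sequence β₀ = 1, β_{k+1} = β_k + 1/β_k satisfies β_k ≤ 1/(1+√3) + √(2k+1) for all k ≥ 0. -/
open Real

theorem stmt_0 (β : ℕ → ℝ) (h0 : β 0 = 1)
    (hrec : ∀ k, β (k + 1) = β k + 1 / β k) :
    ∀ k : ℕ, β k ≤ 1 / (1 + Real.sqrt 3) + Real.sqrt (2 * k + 1) := by
  have ht : (1:ℝ) ≤ Real.sqrt 3 := by
    rw [show (1:ℝ) = Real.sqrt 1 by simp]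
    exact Real.sqrt_le_sqrt (by norm_num)
  have ht2 : Real.sqrt 3 * Real.sqrt 3 = 3 := Real.mul_self_sqrt (by norm_num)
  set t := Real.sqrt 3 with htdef
  set c : ℝ := 1/(1+t) with hcdef
  have hc : c * (1+t) = 1 := by
    rw [hcdef]; field_simp
  have hcpos : 0 < c := by positivity
  have hpos : ∀ k, 1 ≤ β k := by
    intro k
    induction k with
    | zero => simp [h0]
    | succ n ih =>
      rw [hrec]
      have hb : 0 < β n := by linarith
      have : 0 < 1 / β n := by positivity
      linarith
  have hsq : ∀ k : ℕ, (2 * k + 1 : ℝ) ≤ β k ^ 2 := by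
    intro k
    induction k with
    | zero => simp [h0]
    | succ n ih =>
      have hb : 0 < β n := lt_of_lt_of_le one_pos (hpos n)
      rw [hrec]
      have h1 : (β n + 1 / β n) ^ 2 = β n ^ 2 + 2 + (1 / β n)^2 := by
        field_simp; ring
      rw [h1]
      have h2 : (0:ℝ) ≤ (1/β n)^2 := by positivity
      push_cast
      push_cast at ih
      nlinarith
  have hlow : ∀ k : ℕ, Real.sqrt (2 * k + 1) ≤ β k := by
    intro k
    have hb : (0:ℝ) ≤ β k := le_trans zero_le_one (hpos k)
    calc Real.sqrt (2*k+1) ≤ Real.sqrt (β k ^ 2) := Real.sqrt_le_sqrt (hsq k)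
    _ = β k := by rw [Real.sqrt_sq hb]
  intro k
  induction k with
  | zero =>
    rw [h0]
    have h1 : Real.sqrt (2 * (0:ℕ) + 1) = 1 := by norm_num
    rw [h1]
    linarith
  | succ n ih =>
    have hb : 1 ≤ β n := hpos n
    have hbp : 0 < β n := lt_of_lt_of_le one_pos hb
    have hn0 : (0:ℝ) ≤ (n:ℝ) := Nat.cast_nonneg n
    have hsp : (0:ℝ) < 2*n+1 := by positivity
    set a := Real.sqrt (2*(n:ℝ)+1) with hadef
    have ha2 : a * a = 2*n+1 := Real.mul_self_sqrt hsp.le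
    have ha0 : 0 ≤ a := Real.sqrt_nonneg _
    have ha1 : 1 ≤ a := by nlinarith
    set b := Real.sqrt (2*((n:ℝ)+1)+1) with hbdef
    have hb2 : b * b = 2*n+3 := by
      rw [hbdef, Real.mul_self_sqrt (by linarith)]; ring
    have hb0 : 0 ≤ b := Real.sqrt_nonneg _
    have htb : t ≤ b := by
      rw [hbdef, htdef]
      exact Real.sqrt_le_sqrt (by linarith)
    have hlown : a ≤ β n := hlow n
    have ihn : β n ≤ c + a := ih
    clear_value t c a b
    have hcap : (0:ℝ) < c + a := by linarith
    -- monotonicity of x + 1/x on [1, ∞)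
    have hmono : β n + 1 / β n ≤ (c + a) + 1 / (c + a) := by
      have hid : (c + a) + 1 / (c + a) - (β n + 1 / β n)
          = ((c + a) - β n) * (β n * (c + a) - 1) / (β n * (c + a)) := by
        field_simp; ring
      have hnum : 0 ≤ ((c + a) - β n) * (β n * (c + a) - 1) := by
        apply mul_nonneg (by linarith)
        nlinarith
      have hq : 0 ≤ ((c + a) - β n) * (β n * (c + a) - 1) / (β n * (c + a)) := by
        apply div_nonneg hnum (by positivity)
      linarith [hid, hq]
    -- key inequality
    have hba : a ≤ b := by nlinarith [hb0]
    have habp : (0:ℝ) < a + b := by linarith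
    have hdiff : (b - a) * (a + b) = 2 := by linear_combination hb2 - ha2
    have hbale : b - a ≤ 2 * c := by
      have h1 : (b - a) * (1 + t) ≤ 2 := by
        nlinarith [mul_nonneg (sub_nonneg.2 hba) (by linarith : (0:ℝ) ≤ (a + b) - (1 + t))]
      nlinarith [h1, hc, ht]
    have hkey : a + 1 / (c + a) ≤ b := by
      have h2 : (b - a) * (c + a) * (a + b) = 2 * (c + a) := by
        linear_combination (c + a) * hdiff
      have h5 : a + b ≤ 2 * (c + a) := by linarith
      have h6 : 1 * (a + b) ≤ ((b - a) * (c + a)) * (a + b) := by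
        rw [one_mul]; linarith [h2]
      have h3 : 1 ≤ (b - a) * (c + a) := le_of_mul_le_mul_right h6 habp
      have h4 : 1 / (c + a) ≤ b - a := by
        rw [div_le_iff₀ hcap]; linarith [h3]
      linarith
    have hfin : b = Real.sqrt (2 * ((n+1:ℕ):ℝ) + 1) := by
      rw [hbdef]; push_cast; ring_nf
    rw [← hfin]
    calc β (n+1) = β n + 1 / β n := hrec n
    _ ≤ (c + a) + 1 / (c + a) := hmono
    _ ≤ c + b := by linarith
end

section
/- Let f : ℝᵈ → ℝ and f₁,...,f_n : ℝᵈ → ℝ be convex, h₁,...,h_p : ℝᵈ → ℝ affine. Suppose (x*, μ*, θ*) with μ* ∈ ℝⁿ₊ is a saddle point of the Lagrangian L(x, μ, θ) = f(x) + ∑ μᵢ fᵢ(x) + ∑ θᵢ hᵢ(x), i.e. L(x*, μ, θ) ≤ L(x*, μ*, θ*) ≤ L(x, μ*, θ*) for all x ∈ ℝᵈ, μ ≥ 0, θ ∈ ℝᵖ. Define f̄(x) = max(f₁(x),...,f_n(x), |h₁(x)|,...,|h_p(x)|), λ* = ∑ μᵢ* + ∑ |θᵢ*|, and F(x, λ)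 = f(x) + λ f̄(x). Then F(x*, λ) ≤ F(x, λ*) for all x ∈ ℝᵈ and λ ≥ 0. -/
open RealInnerProductSpace

theorem stmt_8 (d n p : ℕ) (hn : 0 < n)
    (f : EuclideanSpace ℝ (Fin d) → ℝ)
    (fi : Fin n → EuclideanSpace ℝ (Fin d) → ℝ)
    (h : Fin p → EuclideanSpace ℝ (Fin d) → ℝ)
    (hf : ConvexOn ℝ Set.univ f)
    (hfi : ∀ i, ConvexOn ℝ Set.univ (fi i))
    (haff : ∀ i, ∃ (a : EuclideanSpace ℝ (Fin d)) (b : ℝ), ∀ x, h i x = ⟪a, x⟫ + b)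
    (L : EuclideanSpace ℝ (Fin d) → (Fin n → ℝ) → (Fin p → ℝ) → ℝ)
    (hL : ∀ x μ θ, L x μ θ = f x + ∑ i, μ i * fi i x + ∑ i, θ i * h i x)
    (xstar : EuclideanSpace ℝ (Fin d)) (μstar : Fin n → ℝ) (θstar : Fin p → ℝ)
    (hμstar : ∀ i, 0 ≤ μstar i)
    (hfeas1 : ∀ i, fi i xstar ≤ 0) (hfeas2 : ∀ i, h i xstar = 0)
    (hsaddle : ∀ (x : EuclideanSpace ℝ (Fin d)) (μ : Fin n → ℝ) (θ : Fin p → ℝ),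
      (∀ i, 0 ≤ μ i) →
        L xstar μ θ ≤ L xstar μstar θstar ∧ L xstar μstar θstar ≤ L x μstar θstar)
    (fbar : EuclideanSpace ℝ (Fin d) → ℝ)
    (hfbar : ∀ x, fbar x = Finset.univ.sup'
      (Finset.univ_nonempty_iff.mpr ⟨Sum.inl ⟨0, hn⟩⟩)
      (Sum.elim (fun i => fi i x) (fun j => |h j x|)))
    (lamstar : ℝ) (hlamstar : lamstar = ∑ i, μstar i + ∑ i, |θstar i|)
    (F : EuclideanSpace ℝ (Fin d) → ℝ → ℝ)
    (hF : ∀ x lam, F x lam = f x + lam * fbar x) :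
    ∀ (x : EuclideanSpace ℝ (Fin d)) (lam : ℝ), 0 ≤ lam →
      F xstar lam ≤ F x lamstar := by
  intro x lam hlam
  have hfb1 : ∀ i, fi i x ≤ fbar x := fun i => by
    rw [hfbar]
    exact Finset.le_sup' (Sum.elim (fun i => fi i x) (fun j => |h j x|)) (Finset.mem_univ (Sum.inl i))
  have hfb2 : ∀ j, |h j x| ≤ fbar x := fun j => by
    rw [hfbar]
    exact Finset.le_sup' (Sum.elim (fun i => fi i x) (fun j => |h j x|)) (Finset.mem_univ (Sum.inr j))
  have hfbx : fbar xstar ≤ 0 := by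
    rw [hfbar]
    apply Finset.sup'_le
    intro i _
    cases i with
    | inl i => exact hfeas1 i
    | inr j => simp [hfeas2 j]
  have h1 : f xstar ≤ L xstar μstar θstar := by
    have := (hsaddle xstar (fun _ => 0) (fun _ => 0) (fun _ => le_refl 0)).1
    rw [hL] at this
    simpa using this
  have h2 : L xstar μstar θstar ≤ L x μstar θstar :=
    (hsaddle x μstar θstar hμstar).2
  have h3 : L x μstar θstar ≤ f x + lamstar * fbar x := by
    rw [hL, hlamstar, add_mul, Finset.sum_mul, Finset.sum_mul, add_assoc]
    refine add_le_add le_rfl (add_le_add ?_ ?_)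
    · exact Finset.sum_le_sum fun i _ =>
        mul_le_mul_of_nonneg_left (hfb1 i) (hμstar i)
    · refine Finset.sum_le_sum fun j _ => ?_
      calc θstar j * h j x ≤ |θstar j * h j x| := le_abs_self _
        _ = |θstar j| * |h j x| := abs_mul _ _
        _ ≤ |θstar j| * fbar x :=
            mul_le_mul_of_nonneg_left (hfb2 j) (abs_nonneg _)
  have key : f xstar ≤ f x + lamstar * fbar x := le_trans h1 (le_trans h2 h3)
  rw [hF, hF]
  have : lam * fbar xstar ≤ 0 := mul_nonpos_of_nonneg_of_nonpos hlam hfbx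
  linarith
end

section
/- Let (w_k) in ℝⁿ, (s_k) in ℝⁿ, (β_k) in ℝ be defined by: β₀ = 1, β_{k+1} = β_k + 1/β_k, s₀ = 0, s_{k+1} = s_k + v_k where each v_k is a unit vector (‖v_k‖ = 1), and w_{k+1} = w₀ - s_{k+1}/β_k. Define U_β^s(w) = -⟨s, w - w₀⟩ - (β/2)‖w - w₀‖². Then for any k̄ ≥ 1, ∑_{k=1}^{k̄} ⟨w_k - w₀, v_k⟩ ≤ -U_{β_{k̄}}^{s_{k̄+1}}(w_{k̄+1}) + β_{k̄}/2. -/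
open RealInnerProductSpace

theorem stmt_11 (n : ℕ)
    (β : ℕ → ℝ) (hβ0 : β 0 = 1) (hβrec : ∀ k, β (k + 1) = β k + 1 / β k)
    (v s w : ℕ → EuclideanSpace ℝ (Fin n))
    (hv : ∀ k, ‖v k‖ = 1)
    (hs0 : s 0 = 0) (hsrec : ∀ k, s (k + 1) = s k + v k)
    (hwrec : ∀ k, w (k + 1) = w 0 - (β k)⁻¹ • s (k + 1))
    (U : EuclideanSpace ℝ (Fin n) → ℝ → EuclideanSpace ℝ (Fin n) → ℝ)
    (hU : ∀ σ b ω, U σ b ω = -⟪σ, ω - w 0⟫ - b / 2 * ‖ω - w 0‖ ^ 2) :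
    ∀ kbar : ℕ, 1 ≤ kbar →
      ∑ k ∈ Finset.Icc 1 kbar, ⟪w k - w 0, v k⟫ ≤
        -(U (s (kbar + 1)) (β kbar) (w (kbar + 1))) + β kbar / 2 := by
  have hβ1 : ∀ k, 1 ≤ β k := by
    intro k
    induction k with
    | zero => simp [hβ0]
    | succ k ih =>
      have hb : (0:ℝ) < β k := by linarith
      have : 0 < 1 / β k := by positivity
      rw [hβrec]; linarith
  have hβpos : ∀ k, (0:ℝ) < β k := fun k => lt_of_lt_of_le one_pos (hβ1 k)
  have hwsub : ∀ k, w (k + 1) - w 0 = -((β k)⁻¹ • s (k + 1)) := by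
    intro k; rw [hwrec k]; abel
  have hUval : ∀ k, U (s (k + 1)) (β k) (w (k + 1)) = ‖s (k + 1)‖ ^ 2 / (2 * β k) := by
    intro k
    have hb := hβpos k
    rw [hU, hwsub k]
    rw [inner_neg_right, real_inner_smul_right, real_inner_self_eq_norm_sq,
      norm_neg, norm_smul]
    rw [Real.norm_eq_abs, abs_of_pos (by positivity : (0:ℝ) < (β k)⁻¹)]
    field_simp
    ring
  have hterm : ∀ k, ⟪w (k + 1) - w 0, v (k + 1)⟫ = -((β k)⁻¹ * ⟪s (k + 1), v (k + 1)⟫) := by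
    intro k
    rw [hwsub k, inner_neg_left, real_inner_smul_left]
  have key : ∀ kbar : ℕ, 1 ≤ kbar →
      ∑ k ∈ Finset.Icc 1 kbar, ⟪w k - w 0, v k⟫ ≤
        -(‖s (kbar + 1)‖ ^ 2 / (2 * β kbar)) + β kbar / 2 := by
    intro kbar hk
    induction kbar, hk using Nat.le_induction with
    | base =>
      rw [show Finset.Icc 1 1 = {1} from rfl, Finset.sum_singleton]
      have hs1 : s 1 = v 0 := by rw [hsrec, hs0]; simp
      have hs2 : s 2 = v 0 + v 1 := by rw [show (2:ℕ) = 1 + 1 from rfl, hsrec, hs1]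
      have hβ1v : β 1 = 2 := by rw [hβrec, hβ0]; norm_num
      have ht := hterm 0
      rw [hβ0] at ht
      have hnorm : ‖s 2‖ ^ 2 = 2 + 2 * ⟪v 0, v 1⟫ := by
        rw [hs2, norm_add_sq_real, hv 0, hv 1]; ring
      have hcs : -(1:ℝ) ≤ ⟪v 0, v 1⟫ := by
        have := abs_real_inner_le_norm (v 0) (v 1)
        rw [hv 0, hv 1] at this
        have := abs_le.mp (by linarith : |⟪v 0, v 1⟫| ≤ 1)
        linarith [this.1]
      rw [ht, hs1, hβ1v, hnorm]
      have : (2 + 2 * ⟪v 0, v 1⟫) / (2 * 2) = 1 / 2 + ⟪v 0, v 1⟫ / 2 := by ring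
      rw [this]
      linarith
    | succ m hm ih =>
      rw [Finset.sum_Icc_succ_top (by omega : 1 ≤ m + 1), hterm m]
      have hb := hβpos m
      have hb' : (0:ℝ) < β (m + 1) := hβpos (m + 1)
      have hnorm : ‖s (m + 2)‖ ^ 2 = ‖s (m + 1)‖ ^ 2 + 2 * ⟪s (m + 1), v (m + 1)⟫ + 1 := by
        rw [show m + 2 = (m + 1) + 1 from rfl, hsrec, norm_add_sq_real, hv (m + 1)]; ring
      set a := ‖s (m + 1)‖ ^ 2 with ha
      set c := ⟪s (m + 1), v (m + 1)⟫ with hc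
      have ha0 : 0 ≤ a := by positivity
      have hs2nn : (0:ℝ) ≤ a + 2 * c + 1 := by rw [← hnorm]; positivity
      have hβr : β (m + 1) = β m + 1 / β m := hβrec m
      have hble : β m ≤ β (m + 1) := by
        have : 0 < 1 / β m := by positivity
        rw [hβr]; linarith
      have hineq : -(a / (2 * β m)) + β m / 2 + -((β m)⁻¹ * c) ≤
          -(‖s (m + 1 + 1)‖ ^ 2 / (2 * β (m + 1))) + β (m + 1) / 2 := by
        rw [show m + 1 + 1 = m + 2 from rfl, hnorm]
        have hinv : (β (m + 1))⁻¹ ≤ (β m)⁻¹ := by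
          apply inv_anti₀ hb hble
        have h1 : (a + 2 * c + 1) / (2 * β (m + 1)) ≤ (a + 2 * c + 1) / (2 * β m) := by
          rw [div_eq_mul_inv, div_eq_mul_inv, mul_inv, mul_inv]
          apply mul_le_mul_of_nonneg_left _ hs2nn
          apply mul_le_mul_of_nonneg_left hinv (by norm_num)
        have h2 : β (m + 1) / 2 = β m / 2 + 1 / (2 * β m) := by
          rw [hβr]; field_simp
        have h3 : (a + 2 * c + 1) / (2 * β m) = a / (2 * β m) + (β m)⁻¹ * c + 1 / (2 * β m) := by
          field_simp
        linarith
      linarith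
  intro kbar hk
  rw [hUval kbar]
  exact key kbar hk
end

section
/- With the setup of the weighted dual averages recursion (β₀ = 1, β_{k+1} = β_k + 1/β_k, s₀ = 0, s_{k+1} = s_k + v_k with ‖v_k‖ = 1, w_{k+1} = w₀ - s_{k+1}/β_k), suppose w* ∈ ℝⁿ satisfies ⟨v_k, w_k - w*⟩ ≥ 0 for all k ≥ 0. Then for every k̄ ≥ 1, ‖w_{k̄} - w*‖ ≤ ‖w₀ - w*‖ + 1. -/
open RealInnerProductSpace

theorem stmt_12 (n : ℕ)
    (β : ℕ → ℝ) (hβ0 : β 0 = 1) (hβrec : ∀ k, β (k + 1) = β k + 1 / β k)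
    (v s w : ℕ → EuclideanSpace ℝ (Fin n))
    (hv : ∀ k, ‖v k‖ = 1)
    (hs0 : s 0 = 0) (hsrec : ∀ k, s (k + 1) = s k + v k)
    (hwrec : ∀ k, w (k + 1) = w 0 - (β k)⁻¹ • s (k + 1))
    (wstar : EuclideanSpace ℝ (Fin n))
    (hmono : ∀ k, 0 ≤ ⟪v k, w k - wstar⟫) :
    ∀ kbar : ℕ, 1 ≤ kbar → ‖w kbar - wstar‖ ≤ ‖w 0 - wstar‖ + 1 := by
  have hβ1 : ∀ k, 1 ≤ β k := by
    intro k
    induction k with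
    | zero => rw [hβ0]
    | succ k ih =>
      rw [hβrec]
      have h0 : 0 < β k := lt_of_lt_of_le one_pos ih
      have : 0 < 1 / β k := by positivity
      nlinarith
  have hβpos : ∀ k, 0 < β k := fun k => lt_of_lt_of_le one_pos (hβ1 k)
  set g : EuclideanSpace ℝ (Fin n) := w 0 - wstar with hg
  set G : ℝ := ‖g‖ + 1 with hGdef
  have hG1 : 1 ≤ G := by
    have := norm_nonneg g
    rw [hGdef]; linarith
  -- relation between w (k+1) - wstar and the auxiliary vector
  have hwa : ∀ k, w (k + 1) - wstar = (β k)⁻¹ • (β k • g - s (k + 1)) := by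
    intro k
    rw [hwrec k, smul_sub, smul_smul, inv_mul_cancel₀ (hβpos k).ne', one_smul]
    rw [hg]
    abel
  -- main invariant
  have key : ∀ k, ‖β k • g - s (k + 1)‖ ≤ β k * G := by
    intro k
    induction k with
    | zero =>
      have hs1 : s 1 = v 0 := by rw [hsrec, hs0, zero_add]
      rw [hβ0, one_smul, hs1, one_mul]
      have hm := hmono 0
      rw [← hg] at hm
      have hsq : ‖g - v 0‖ ^ 2 ≤ G ^ 2 := by
        rw [norm_sub_sq_real]
        have h1 := hv 0
        have h2 := norm_nonneg g
        have h3 : ⟪v 0, g⟫ = ⟪g, v 0⟫ := real_inner_comm _ _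
        rw [hGdef]
        nlinarith
      nlinarith [norm_nonneg (g - v 0), add_nonneg (norm_nonneg g) zero_le_one]
    | succ k ih =>
      have hβk := hβpos k
      -- inner product nonneg
      have hinner : 0 ≤ ⟪v (k + 1), β k • g - s (k + 1)⟫ := by
        have hm := hmono (k + 1)
        rw [hwa k, real_inner_smul_right] at hm
        exact nonneg_of_mul_nonneg_right hm (inv_pos.mpr hβk)
      -- expansion of the recursion
      have hrec : β (k + 1) • g - s (k + 2) =
          (β k • g - s (k + 1) - v (k + 1)) + (β k)⁻¹ • g := by
        rw [hβrec k, hsrec (k + 1), one_div]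
        module
      have h1 : ‖β k • g - s (k + 1) - v (k + 1)‖ ^ 2 ≤ (β k * G) ^ 2 + 1 := by
        rw [norm_sub_sq_real]
        have h2 := hv (k + 1)
        have h3 : ⟪β k • g - s (k + 1), v (k + 1)⟫ = ⟪v (k + 1), β k • g - s (k + 1)⟫ :=
          real_inner_comm _ _
        nlinarith [ih, norm_nonneg (β k • g - s (k + 1)), mul_nonneg (le_of_lt hβk) (le_trans zero_le_one hG1)]
      have h4 : ‖β k • g - s (k + 1) - v (k + 1)‖ ≤ β k * G + (β k)⁻¹ := by
        have hb : 0 < (β k)⁻¹ := inv_pos.mpr hβk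
        have hc2 : (β k * G) ^ 2 + 1 ≤ (β k * G + (β k)⁻¹) ^ 2 := by
          have hexp : (β k * G + (β k)⁻¹) ^ 2
              = (β k * G) ^ 2 + 2 * G * (β k * (β k)⁻¹) + ((β k)⁻¹) ^ 2 := by ring
          rw [hexp, mul_inv_cancel₀ hβk.ne']
          nlinarith [sq_nonneg ((β k)⁻¹)]
        have hcpos : 0 ≤ β k * G + (β k)⁻¹ := by positivity
        have hs := Real.sqrt_le_sqrt (h1.trans hc2)
        rwa [Real.sqrt_sq (norm_nonneg _), Real.sqrt_sq hcpos] at hs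
      calc ‖β (k + 1) • g - s (k + 2)‖
          ≤ ‖β k • g - s (k + 1) - v (k + 1)‖ + ‖(β k)⁻¹ • g‖ := by
            rw [hrec]; exact norm_add_le _ _
        _ ≤ (β k * G + (β k)⁻¹) + (β k)⁻¹ * ‖g‖ := by
            rw [norm_smul, Real.norm_eq_abs, abs_of_pos (inv_pos.mpr hβk)]
            linarith
        _ = β (k + 1) * G := by
            rw [hβrec k, hGdef, one_div]; ring
  intro kbar hk
  obtain ⟨k, rfl⟩ : ∃ k, kbar = k + 1 := ⟨kbar - 1, (Nat.succ_pred_eq_of_pos hk).symm⟩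
  rw [hwa k, norm_smul, Real.norm_eq_abs, abs_of_pos (inv_pos.mpr (hβpos k))]
  calc (β k)⁻¹ * ‖β k • g - s (k + 1)‖ ≤ (β k)⁻¹ * (β k * G) := by
        exact mul_le_mul_of_nonneg_left (key k) (le_of_lt (inv_pos.mpr (hβpos k)))
    _ = G := by rw [← mul_assoc, inv_mul_cancel₀ (hβpos k).ne', one_mul]
end

section
/- With the setup of the weighted dual averages recursion and the assumption ⟨v_k, w_k - w*⟩ ≥ 0 for all k, if additionally w₀ ≠ w*, then the bound is strict: ‖w_{k̄} - w*‖ < ‖w₀ - w*‖ + 1 for all k̄ ≥ 1. -/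
open RealInnerProductSpace

theorem stmt_13 (n : ℕ)
    (β : ℕ → ℝ) (hβ0 : β 0 = 1) (hβrec : ∀ k, β (k + 1) = β k + 1 / β k)
    (v s w : ℕ → EuclideanSpace ℝ (Fin n))
    (hv : ∀ k, ‖v k‖ = 1)
    (hs0 : s 0 = 0) (hsrec : ∀ k, s (k + 1) = s k + v k)
    (hwrec : ∀ k, w (k + 1) = w 0 - (β k)⁻¹ • s (k + 1))
    (wstar : EuclideanSpace ℝ (Fin n))
    (hmono : ∀ k, 0 ≤ ⟪v k, w k - wstar⟫)
    (hne : w 0 ≠ wstar) :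
    ∀ kbar : ℕ, 1 ≤ kbar → ‖w kbar - wstar‖ < ‖w 0 - wstar‖ + 1 := by
  set a : EuclideanSpace ℝ (Fin n) := w 0 - wstar with ha
  have hβpos : ∀ k, 0 < β k := by
    intro k
    induction k with
    | zero => rw [hβ0]; norm_num
    | succ k ih => rw [hβrec]; positivity
  -- key invariant
  have inv : ∀ k, ‖s (k + 1)‖ ^ 2 - 2 * β k * ⟪a, s (k + 1)⟫ ≤ (β k) ^ 2 := by
    intro k
    induction k with
    | zero =>
      have h0 := hmono 0
      have hs1 : s 1 = v 0 := by rw [hsrec 0, hs0, zero_add]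
      have hsym : ⟪a, v 0⟫ = ⟪v 0, a⟫ := real_inner_comm _ _
      rw [hs1, hβ0, hv 0, hsym]
      nlinarith [h0]
    | succ k ih =>
      have hb := hβpos k
      set b := β k with hbdef
      set c := b⁻¹ with hcdef
      have hbc : b * c = 1 := mul_inv_cancel₀ (ne_of_gt hb)
      have hc : 0 < c := by positivity
      -- expand s (k+2)
      have hS : ‖s (k + 2)‖ ^ 2
          = ‖s (k + 1)‖ ^ 2 + 2 * ⟪s (k + 1), v (k + 1)⟫ + 1 := by
        rw [hsrec (k + 1), @norm_add_sq_real, hv (k + 1)]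
        ring
      have hin : ⟪a, s (k + 2)⟫ = ⟪a, s (k + 1)⟫ + ⟪a, v (k + 1)⟫ := by
        rw [hsrec (k + 1), inner_add_right]
      -- monotonicity at k+1
      have hm := hmono (k + 1)
      rw [hwrec k] at hm
      have hm' : 0 ≤ ⟪v (k + 1), a⟫ - c * ⟪v (k + 1), s (k + 1)⟫ := by
        have : w 0 - c • s (k + 1) - wstar = a - c • s (k + 1) := by
          rw [ha]; abel
        rw [this, inner_sub_right, inner_smul_right] at hm
        linarith
      have hsym1 : ⟪v (k + 1), a⟫ = ⟪a, v (k + 1)⟫ := real_inner_comm _ _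
      have hsym2 : ⟪v (k + 1), s (k + 1)⟫ = ⟪s (k + 1), v (k + 1)⟫ :=
        real_inner_comm _ _
      rw [hsym1, hsym2] at hm'
      -- ‖s+v‖² ≥ 0
      have hnn : 0 ≤ ‖s (k + 1)‖ ^ 2 + 2 * ⟪s (k + 1), v (k + 1)⟫ + 1 := by
        rw [← hS]; positivity
      have hβk1 : β (k + 1) = b + c := by
        rw [hβrec k, one_div]
      rw [hβk1, hS, hin]
      set p := ⟪a, s (k + 1)⟫
      set q := ⟪s (k + 1), v (k + 1)⟫
      set r := ⟪a, v (k + 1)⟫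
      set S := ‖s (k + 1)‖ ^ 2
      have hA : c ^ 2 * S - 2 * c * p ≤ 1 := by
        have h := mul_le_mul_of_nonneg_left ih (by positivity : (0:ℝ) ≤ c ^ 2)
        calc c ^ 2 * S - 2 * c * p
            = c ^ 2 * (S - 2 * b * p) := by linear_combination 2 * c * p * hbc
          _ ≤ c ^ 2 * b ^ 2 := h
          _ = 1 := by linear_combination (b * c + 1) * hbc
      have hB : 0 ≤ c ^ 2 * S + 2 * c ^ 2 * q + c ^ 2 := by
        have h := mul_nonneg (sq_nonneg c) hnn
        linarith [h]
      have hC : 2 * q + 2 * c ^ 2 * q ≤ 2 * (b + c) * r := by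
        have h := mul_nonneg (by positivity : (0:ℝ) ≤ 2 * (b + c)) hm'
        calc 2 * q + 2 * c ^ 2 * q
            = 2 * (b + c) * (c * q) := by linear_combination (-2 * q) * hbc
          _ ≤ 2 * (b + c) * r := by linarith [h]
      have hD : (b + c) ^ 2 = b ^ 2 + 2 + c ^ 2 := by linear_combination 2 * hbc
      linarith [ih, hA, hB, hC, hD]
  intro kbar hk
  obtain ⟨k, rfl⟩ := Nat.exists_eq_add_of_le hk
  have hb := hβpos k
  set b := β k with hbdef
  set c := b⁻¹ with hcdef
  have hbc : b * c = 1 := mul_inv_cancel₀ (ne_of_gt hb)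
  have hwk : w (1 + k) - wstar = a - c • s (k + 1) := by
    have h1 : 1 + k = k + 1 := by ring
    rw [h1, hwrec k, ha]; abel
  have key : c ^ 2 * ‖s (k + 1)‖ ^ 2 - 2 * c * ⟪a, s (k + 1)⟫ ≤ 1 := by
    have h := mul_le_mul_of_nonneg_left (inv k) (by positivity : (0:ℝ) ≤ c ^ 2)
    calc c ^ 2 * ‖s (k + 1)‖ ^ 2 - 2 * c * ⟪a, s (k + 1)⟫
        = c ^ 2 * (‖s (k + 1)‖ ^ 2 - 2 * b * ⟪a, s (k + 1)⟫) := by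
          linear_combination 2 * c * ⟪a, s (k + 1)⟫ * hbc
      _ ≤ c ^ 2 * b ^ 2 := h
      _ = 1 := by linear_combination (b * c + 1) * hbc
  have hsq : ‖w (1 + k) - wstar‖ ^ 2 ≤ ‖a‖ ^ 2 + 1 := by
    rw [hwk, @norm_sub_sq_real, inner_smul_right, norm_smul, norm_inv,
      Real.norm_eq_abs, abs_of_pos hb, mul_pow]
    have : (b⁻¹) ^ 2 = c ^ 2 := by rw [hcdef]
    rw [this]
    linarith [key]
  have hapos : 0 < ‖a‖ := by
    rw [norm_pos_iff]
    intro h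
    exact hne (by rwa [ha, sub_eq_zero] at h)
  have hlt : ‖w (1 + k) - wstar‖ ^ 2 < (‖a‖ + 1) ^ 2 := by
    nlinarith
  calc ‖w (1 + k) - wstar‖ < ‖a‖ + 1 :=
        lt_of_pow_lt_pow_left₀ 2 (by positivity) hlt
    _ = ‖w 0 - wstar‖ + 1 := by rw [ha]
end

section
/- Iteration complexity: let C₁, C₂ > 0, ε₁, ε₂ > 0, and α = (1/2)(1/(√8(1+√3)) + 1)². If K ≥ α · max(C₁/ε₁, C₂/ε₂)² and K ≥ 1, then for i = 1, 2: (C_i / (2(K+1))) · (1/(1+√3) + √(2K+1)) ≤ ε_i. -/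
-- key polynomial inequality, variables: a=√2, b=√3, t=√K, u=√(2K+1)
lemma aux_poly (a b t u : ℝ) (ha : a^2 = 2) (hb : b^2 = 3) (hu : u^2 = 2*t^2+1)
    (ht : 1 ≤ t) (ha0 : 0 < a) (hb0 : 0 < b) (hu0 : 0 ≤ u) :
    4*t*(1+(1+b)*u) ≤ 2*(t^2+1)*(1+2*a*(1+b)) := by
  have h1 : 2*a*t*u ≤ 4*t^2+1 := by nlinarith [sq_nonneg (a*t-u)]
  have h2 : 4*t*u ≤ 4*a*t^2 + a := by nlinarith [mul_le_mul_of_nonneg_left h1 ha0.le]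
  nlinarith [sq_nonneg (t-1), mul_le_mul_of_nonneg_right h2 (by linarith : (0:ℝ) ≤ 1+b),
    mul_pos ha0 hb0, mul_pos (mul_pos ha0 hb0) (mul_pos (show (0:ℝ)<t by linarith) (show (0:ℝ)<t by linarith))]

lemma aux (a b t u c e : ℝ) (ha : a^2 = 2) (hb : b^2 = 3) (hu : u^2 = 2*t^2+1)
    (ht : 1 ≤ t) (ha0 : 0 < a) (hb0 : 0 < b) (hu0 : 0 ≤ u) (hc : 0 < c) (he : 0 < e)
    (h : (1+2*a*(1+b))^2*c^2 ≤ 16*t^2*e^2*(1+b)^2) :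
    c*(1+(1+b)*u) ≤ 2*(t^2+1)*e*(1+b) := by
  have ht0 : (0:ℝ) < t := by linarith
  have hb1 : (0:ℝ) < 1+b := by linarith
  have hX : (0:ℝ) < 1+2*a*(1+b) := by positivity
  have h' : (1+2*a*(1+b))*c ≤ 4*t*e*(1+b) := by
    have h1 : ((1+2*a*(1+b))*c)^2 ≤ (4*t*e*(1+b))^2 := by nlinarith [h]
    have hY : (0:ℝ) < 4*t*e*(1+b) := by positivity
    have hXc : (0:ℝ) ≤ (1+2*a*(1+b))*c := by positivity
    nlinarith [h1, hY, hXc]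
  have hP := aux_poly a b t u ha hb hu ht ha0 hb0 hu0
  have hu1 : (0:ℝ) ≤ 1+(1+b)*u := by positivity
  nlinarith [mul_le_mul_of_nonneg_right h' hu1,
    mul_le_mul_of_nonneg_left hP (by positivity : (0:ℝ) ≤ e*(1+b)), hX,
    mul_pos he hb1]

lemma one_side (K : ℕ) (hK1 : 1 ≤ K) (c e α : ℝ) (hc : 0 < c) (he : 0 < e)
    (hα : α = 1 / 2 * (1 / (Real.sqrt 8 * (1 + Real.sqrt 3)) + 1) ^ 2)
    (h : α * (c / e) ^ 2 ≤ (K : ℝ)) :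
    c / (2 * (K + 1)) * (1 / (1 + Real.sqrt 3) + Real.sqrt (2 * K + 1)) ≤ e := by
  set a := Real.sqrt 2 with hadef
  set b := Real.sqrt 3 with hbdef
  set t := Real.sqrt K with htdef
  set u := Real.sqrt (2 * K + 1) with hudef
  have ha : a ^ 2 = 2 := Real.sq_sqrt (by norm_num)
  have hb : b ^ 2 = 3 := Real.sq_sqrt (by norm_num)
  have ha0 : (0:ℝ) < a := Real.sqrt_pos.mpr (by norm_num)
  have hb0 : (0:ℝ) < b := Real.sqrt_pos.mpr (by norm_num)
  have hu0 : (0:ℝ) ≤ u := Real.sqrt_nonneg _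
  have hKR : (1:ℝ) ≤ (K:ℝ) := by exact_mod_cast hK1
  have ht2 : t ^ 2 = (K:ℝ) := Real.sq_sqrt (by linarith)
  have ht : 1 ≤ t := by
    rw [htdef, show (1:ℝ) = Real.sqrt 1 by simp]
    exact Real.sqrt_le_sqrt (by linarith)
  have hu2 : u ^ 2 = 2 * t ^ 2 + 1 := by
    rw [ht2, hudef]
    exact Real.sq_sqrt (by linarith)
  have h8 : Real.sqrt 8 = 2 * a := by
    rw [show (8:ℝ) = 2^2 * 2 by norm_num, Real.sqrt_mul (by positivity), Real.sqrt_sq (by norm_num)]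
  have hb1 : (0:ℝ) < 1 + b := by linarith
  rw [hα, h8, ← ht2] at h
  have hD2 : (2 * a * (1 + b)) ^ 2 = 8 * (1 + b) ^ 2 := by
    rw [mul_pow, mul_pow, ha]; ring
  have heq : 1 / 2 * (1 / (2 * a * (1 + b)) + 1) ^ 2 * (c / e) ^ 2
      = ((1 + 2 * a * (1 + b)) ^ 2 * c ^ 2) / (2 * (2 * a * (1 + b)) ^ 2 * e ^ 2) := by
    field_simp
  rw [heq, div_le_iff₀ (by positivity)] at h
  have hauxh : (1 + 2 * a * (1 + b)) ^ 2 * c ^ 2 ≤ 16 * t ^ 2 * e ^ 2 * (1 + b) ^ 2 := by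
    rw [hD2] at h; linarith [h]
  have hfin := aux a b t u c e ha hb hu2 ht ha0 hb0 hu0 hc he hauxh
  rw [← ht2]
  have hgoal' : c / (2 * (t ^ 2 + 1)) * (1 / (1 + b) + u)
      = c * (1 + (1 + b) * u) / (2 * (t ^ 2 + 1) * (1 + b)) := by
    rw [div_mul_eq_mul_div, div_eq_div_iff (by positivity) (by positivity)]
    field_simp
  rw [hgoal', div_le_iff₀ (by positivity)]
  nlinarith [hfin]

theorem stmt_19 (K : ℕ) (hK1 : 1 ≤ K) (C₁ C₂ ε₁ ε₂ α : ℝ)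
    (hC₁ : 0 < C₁) (hC₂ : 0 < C₂) (hε₁ : 0 < ε₁) (hε₂ : 0 < ε₂)
    (hα : α = 1 / 2 * (1 / (Real.sqrt 8 * (1 + Real.sqrt 3)) + 1) ^ 2)
    (hK : α * max (C₁ / ε₁) (C₂ / ε₂) ^ 2 ≤ (K : ℝ)) :
    C₁ / (2 * (K + 1)) * (1 / (1 + Real.sqrt 3) + Real.sqrt (2 * K + 1)) ≤ ε₁ ∧
    C₂ / (2 * (K + 1)) * (1 / (1 + Real.sqrt 3) + Real.sqrt (2 * K + 1)) ≤ ε₂ := by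
  have hα0 : 0 ≤ α := by
    rw [hα]; positivity
  have key : ∀ c e : ℝ, 0 < c → 0 < e → c / e ≤ max (C₁ / ε₁) (C₂ / ε₂) →
      c / (2 * (K + 1)) * (1 / (1 + Real.sqrt 3) + Real.sqrt (2 * K + 1)) ≤ e := by
    intro c e hc he hle
    apply one_side K hK1 c e α hc he hα
    have h2 : (c / e) ^ 2 ≤ max (C₁ / ε₁) (C₂ / ε₂) ^ 2 :=
      pow_le_pow_left₀ (by positivity) hle 2
    calc α * (c / e) ^ 2 ≤ α * max (C₁ / ε₁) (C₂ / ε₂) ^ 2 :=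
          mul_le_mul_of_nonneg_left h2 hα0
      _ ≤ (K : ℝ) := hK
  exact ⟨key C₁ ε₁ hC₁ hε₁ (le_max_left _ _), key C₂ ε₂ hC₂ hε₂ (le_max_right _ _)⟩
end
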